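/- There do not exist nonnegative real numbers b, c, d with b + c + d = 1 that simultaneously satisfy the six fixed-point equations: b = 0.1 + 0.28·b/(0.4b + 0.3c + 0.8d), b = 0.1 + 0.42·b/(0.6b + 0.7c + 0.2d), c = 0.2 + 0.21·c/(0.4b + 0.3c + 0.8d), c = 0.2 + 0.49·c/(0.6b + 0.7c + 0.2d), d = 0.56·d/(0.4b + 0.3c + 0.8d), and d = 0.14·d/(0.6b + 0.7c + 0.2d). -/

import Mathlib

/-- There do not exist nonnegative reals `b, c, d` with `b + c + d = 1`
satisfying the six fixed-point equations of the three-agent weakly-connected example. -/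
theorem stmt_7 :
    ¬ ∃ b c d : ℝ, 0 ≤ b ∧ 0 ≤ c ∧ 0 ≤ d ∧ b + c + d = 1 ∧
      b = 0.1 + 0.28 * b / (0.4 * b + 0.3 * c + 0.8 * d) ∧
      b = 0.1 + 0.42 * b / (0.6 * b + 0.7 * c + 0.2 * d) ∧
      c = 0.2 + 0.21 * c / (0.4 * b + 0.3 * c + 0.8 * d) ∧
      c = 0.2 + 0.49 * c / (0.6 * b + 0.7 * c + 0.2 * d) ∧
      d = 0.56 * d / (0.4 * b + 0.3 * c + 0.8 * d) ∧
      d = 0.14 * d / (0.6 * b + 0.7 * c + 0.2 * d) := by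
  rintro ⟨b, c, d, hb, hc, hd, hsum, e1, e2, e3, e4, e5, e6⟩
  have hD1 : (0:ℝ) < 0.4 * b + 0.3 * c + 0.8 * d := by nlinarith
  have hD2 : (0:ℝ) < 0.6 * b + 0.7 * c + 0.2 * d := by nlinarith
  have h1 := hD1.ne'
  have h2 := hD2.ne'
  replace e1 : 0.28 * b = (b - 0.1) * (0.4 * b + 0.3 * c + 0.8 * d) := by
    rw [← div_eq_iff h1]; linarith
  replace e2 : 0.42 * b = (b - 0.1) * (0.6 * b + 0.7 * c + 0.2 * d) := by
    rw [← div_eq_iff h2]; linarith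
  replace e5 : 0.56 * d = d * (0.4 * b + 0.3 * c + 0.8 * d) := by
    rw [← div_eq_iff h1]; linarith
  replace e6 : 0.14 * d = d * (0.6 * b + 0.7 * c + 0.2 * d) := by
    rw [← div_eq_iff h2]; linarith
  rcases eq_or_lt_of_le hd with hd0 | hd0
  · -- d = 0
    have hd0 : d = 0 := hd0.symm
    subst hd0
    have hc' : c = 1 - b := by linarith
    subst hc'
    nlinarith [e1, e2, sq_nonneg b]
  · -- d > 0
    nlinarith [e5, e6, mul_pos hd0 hd0, hsum]
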